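/- Let (X,d) be a compact metric space with finite upper box-counting dimension and f: X → X a continuous map. Then the upper dynamical metric order of f vanishes: limsup_{ε→0⁺} (log⁺(limsup_{n→∞} (1/n) log S(X,n,ε)))/|log ε| = 0, where S(X,n,ε) is the maximal cardinality of (n,ε)-separated sets for f. -/

import Mathlib

open Filter Topology

variable {X : Type*}

/-- The Bowen dynamical metric: `bowen ρ f n x y = max_{0 ≤ j < n} ρ (f^[j] x) (f^[j] y)`. -/
noncomputable def bowen (ρ : X → X → ℝ) (f : X → X) : ℕ → X → X → ℝ
  | 0 => fun _ _ => 0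
  | n + 1 => fun x y => max (bowen ρ f n x y) (ρ (f^[n] x) (f^[n] y))

/-- A finite set `E` is `ε`-separated for `ρ`. -/
def IsSep (ρ : X → X → ℝ) (ε : ℝ) (E : Finset X) : Prop :=
  ∀ x ∈ E, ∀ y ∈ E, x ≠ y → ε < ρ x y

/-- Maximal cardinality of an `ε`-separated set. -/
noncomputable def Scard (ρ : X → X → ℝ) (ε : ℝ) : ℕ :=
  sSup {n | ∃ E : Finset X, IsSep ρ ε E ∧ E.card = n}

/-- `log⁺` on extended reals: `log⁺ t = max {0, log t}`, with `log⁺ 0 = 0` and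
`log⁺ (+∞) = +∞`. -/
noncomputable def elogPlus (x : EReal) : EReal :=
  if x = ⊤ then ⊤ else ((max 0 (Real.log x.toReal) : ℝ) : EReal)

lemma isSep_empty (ρ : X → X → ℝ) (ε : ℝ) : IsSep ρ ε (∅ : Finset X) := by
  intro x hx; simp at hx

lemma scardSet_nonempty (ρ : X → X → ℝ) (ε : ℝ) :
    {n | ∃ E : Finset X, IsSep ρ ε E ∧ E.card = n}.Nonempty :=
  ⟨0, ∅, isSep_empty ρ ε, rfl⟩

lemma bowen_le {ρ : X → X → ℝ} {f : X → X} {n : ℕ} {x y : X} {ε : ℝ} (h0 : 0 ≤ ε)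
    (h : ∀ j < n, ρ (f^[j] x) (f^[j] y) ≤ ε) : bowen ρ f n x y ≤ ε := by
  induction n with
  | zero => exact h0
  | succ n ih =>
      exact max_le (ih fun j hj => h j (hj.trans (Nat.lt_succ_self n)))
        (h n (Nat.lt_succ_self n))

section Metric
variable [MetricSpace X]

lemma card_sep_le_card_span {ε : ℝ} {E : Finset X} (hE : IsSep dist ε E)
    (t : Finset X) (ht : ∀ x : X, ∃ c ∈ t, dist x c ≤ ε / 2) : E.card ≤ t.card := by
  classical
  have g : ∀ x : X, ∃ c ∈ t, dist x c ≤ ε / 2 := ht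
  refine Finset.card_le_card_of_injOn (fun x => (g x).choose)
    (fun x _ => (g x).choose_spec.1) ?_
  intro x hx y hy hxy
  by_contra hne
  have hxy' : (g x).choose = (g y).choose := hxy
  have h1 := (g x).choose_spec.2
  have h2 := (g y).choose_spec.2
  have : dist x y ≤ ε := by
    calc dist x y ≤ dist x (g x).choose + dist y (g y).choose := by
          rw [hxy']; exact dist_triangle_right x y (g y).choose
      _ ≤ ε / 2 + ε / 2 := add_le_add h1 h2
      _ = ε := by ring
  exact absurd this (not_le.mpr (hE x hx y hy hne))

lemma card_sep_bowen_le {f : X → X} {ε : ℝ} (hε : 0 < ε) {n : ℕ} {E : Finset X}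
    (hE : IsSep (bowen dist f n) ε E)
    (t : Finset X) (ht : ∀ x : X, ∃ c ∈ t, dist x c ≤ ε / 2) : E.card ≤ t.card ^ n := by
  classical
  have g : ∀ x : X, ∃ c ∈ t, dist x c ≤ ε / 2 := ht
  set G : X → {c // c ∈ t} := fun x => ⟨(g x).choose, (g x).choose_spec.1⟩ with hG
  have key : E.card ≤ (Finset.univ : Finset (Fin n → {c // c ∈ t})).card := by
    refine Finset.card_le_card_of_injOn (fun x => fun j : Fin n => G (f^[(j : ℕ)] x))
      (fun x _ => Finset.mem_univ _) ?_
    intro x hx y hy hxy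
    by_contra hne
    have hb : bowen dist f n x y ≤ ε := by
      refine bowen_le hε.le fun j hj => ?_
      have this : (g (f^[j] x)).choose = (g (f^[j] y)).choose := by
        have h0 := congrFun hxy ⟨j, hj⟩
        simpa [hG, Subtype.ext_iff] using h0
      calc dist (f^[j] x) (f^[j] y)
          ≤ dist (f^[j] x) (g (f^[j] x)).choose + dist (f^[j] y) (g (f^[j] y)).choose := by
            rw [this]; exact dist_triangle_right _ _ _
        _ ≤ ε / 2 + ε / 2 := add_le_add (g (f^[j] x)).choose_spec.2 (g (f^[j] y)).choose_spec.2
        _ = ε := by ring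
    exact absurd hb (not_le.mpr (hE x hx y hy hne))
  calc E.card ≤ _ := key
    _ = t.card ^ n := by
        rw [Finset.card_univ, Fintype.card_fun, Fintype.card_coe, Fintype.card_fin]

variable [CompactSpace X]

lemma exists_net {δ : ℝ} (hδ : 0 < δ) : ∃ t : Finset X, ∀ x : X, ∃ c ∈ t, dist x c ≤ δ := by
  have hc : IsCompact (Set.univ : Set X) := isCompact_univ
  obtain ⟨s, hsfin, hscov⟩ := Metric.totallyBounded_iff.mp hc.totallyBounded δ hδ
  refine ⟨hsfin.toFinset, fun x => ?_⟩
  have := hscov (Set.mem_univ x)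
  simp only [Set.mem_iUnion] at this
  obtain ⟨c, hc, hxc⟩ := this
  exact ⟨c, hsfin.mem_toFinset.mpr hc, (Metric.mem_ball.mp hxc).le⟩

lemma scardSet_bddAbove {ε : ℝ} (hε : 0 < ε) :
    BddAbove {n | ∃ E : Finset X, IsSep dist ε E ∧ E.card = n} := by
  obtain ⟨t, ht⟩ := exists_net (X := X) (half_pos hε)
  exact ⟨t.card, fun n ⟨E, hE, hcard⟩ => hcard ▸ card_sep_le_card_span hE t ht⟩

/-- A maximal separated set exists, has cardinality `Scard`, and is `δ`-spanning. -/
lemma exists_maximal_sep {δ : ℝ} (hδ : 0 < δ) :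
    ∃ E₀ : Finset X, IsSep dist δ E₀ ∧ E₀.card = Scard (dist : X → X → ℝ) δ ∧
      ∀ x : X, ∃ c ∈ E₀, dist x c ≤ δ := by
  classical
  have hmem := Nat.sSup_mem (scardSet_nonempty (dist : X → X → ℝ) δ) (scardSet_bddAbove hδ)
  obtain ⟨E₀, hE₀, hcard⟩ := hmem
  refine ⟨E₀, hE₀, hcard, fun x => ?_⟩
  by_contra hcon
  push_neg at hcon
  have hxE : x ∉ E₀ := fun hx => by
    have := hcon x hx; rw [dist_self] at this; linarith
  have hsep : IsSep dist δ (insert x E₀) := by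
    intro a ha b hb hab
    rcases Finset.mem_insert.mp ha with ha' | ha'
    · rcases Finset.mem_insert.mp hb with hb' | hb'
      · exact absurd (ha'.trans hb'.symm) hab
      · rw [ha']; exact hcon b hb'
    · rcases Finset.mem_insert.mp hb with hb' | hb'
      · rw [hb', dist_comm]; exact hcon a ha'
      · exact hE₀ a ha' b hb' hab
  have hmem' : (insert x E₀).card ∈ {n | ∃ E : Finset X, IsSep dist δ E ∧ E.card = n} :=
    ⟨insert x E₀, hsep, rfl⟩
  have hle := le_csSup (scardSet_bddAbove hδ) hmem'
  rw [Finset.card_insert_of_notMem hxE, hcard] at hle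
  exact absurd hle (by omega)

lemma scard_bowen_le (f : X → X) {ε : ℝ} (hε : 0 < ε) (n : ℕ) :
    Scard (bowen (dist : X → X → ℝ) f n) ε ≤ (Scard (dist : X → X → ℝ) (ε / 2)) ^ n := by
  obtain ⟨E₀, _, hcard, hspan⟩ := exists_maximal_sep (X := X) (half_pos hε)
  refine csSup_le (scardSet_nonempty _ _) ?_
  rintro m ⟨E, hE, rfl⟩
  exact hcard ▸ card_sep_bowen_le hε hE E₀ hspan

lemma one_le_scard [Nonempty X] (ρ : X → X → ℝ) (ε : ℝ) (hbdd : BddAbove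
    {n | ∃ E : Finset X, IsSep ρ ε E ∧ E.card = n}) : 1 ≤ Scard ρ ε := by
  obtain ⟨x⟩ := ‹Nonempty X›
  refine le_csSup hbdd ⟨{x}, ?_, Finset.card_singleton x⟩
  intro a ha b hb hab
  simp only [Finset.mem_singleton] at ha hb
  exact absurd (ha.trans hb.symm) hab

end Metric

lemma lognat_nonneg (m : ℕ) : 0 ≤ Real.log m := by
  rcases Nat.eq_zero_or_pos m with h | h
  · simp [h]
  · exact Real.log_nonneg (by exact_mod_cast h)

lemma maxlog_le {x y : ℝ} (hx : 0 ≤ x) (h : x ≤ y) (hy : 1 ≤ y) :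
    max 0 (Real.log x) ≤ Real.log y := by
  refine max_le (Real.log_nonneg hy) ?_
  rcases eq_or_lt_of_le hx with h0 | h0
  · rw [← h0, Real.log_zero]; exact Real.log_nonneg hy
  · exact Real.log_le_log h0 h

section Metric2
variable {X : Type*} [MetricSpace X] [CompactSpace X]

lemma inner_nonneg (f : X → X) (ε : ℝ) :
    (0 : EReal) ≤ Filter.limsup
      (fun n : ℕ =>
        (((n : ℝ)⁻¹ * Real.log (Scard (bowen (dist : X → X → ℝ) f n) ε) : ℝ) : EReal))
      atTop := by
  refine le_limsup_of_frequently_le (Frequently.of_forall fun n => ?_)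
  have h1 : (0:ℝ) ≤ (n : ℝ)⁻¹ * Real.log (Scard (bowen (dist : X → X → ℝ) f n) ε) :=
    mul_nonneg (by positivity) (lognat_nonneg _)
  exact_mod_cast h1

lemma inner_bound [Nonempty X] (f : X → X) {ε : ℝ} (hε : 0 < ε) :
    Filter.limsup
      (fun n : ℕ =>
        (((n : ℝ)⁻¹ * Real.log (Scard (bowen (dist : X → X → ℝ) f n) ε) : ℝ) : EReal))
      atTop ≤ ((Real.log (Scard (dist : X → X → ℝ) (ε / 2)) : ℝ) : EReal) := by
  set M := Scard (dist : X → X → ℝ) (ε / 2) with hM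
  have hM1 : 1 ≤ M := one_le_scard _ _ (scardSet_bddAbove (half_pos hε))
  have hlogM0 : 0 ≤ Real.log M := Real.log_nonneg (by exact_mod_cast hM1)
  refine limsup_le_of_le (by isBoundedDefault) ?_
  filter_upwards [eventually_ge_atTop 1] with n hn
  rw [EReal.coe_le_coe_iff]
  set S := Scard (bowen (dist : X → X → ℝ) f n) ε with hS
  have hSle : (S : ℝ) ≤ (M : ℝ) ^ n := by
    have := scard_bowen_le f hε n
    exact_mod_cast this
  have hlog : Real.log S ≤ n * Real.log M := by
    rcases Nat.eq_zero_or_pos S with h0 | h0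
    · rw [h0]; simp only [Nat.cast_zero, Real.log_zero]
      exact mul_nonneg (Nat.cast_nonneg n) hlogM0
    · calc Real.log S ≤ Real.log ((M : ℝ) ^ n) :=
            Real.log_le_log (by exact_mod_cast h0) hSle
        _ = n * Real.log M := Real.log_pow (M : ℝ) n
  have hn0 : (n : ℝ) ≠ 0 := by exact_mod_cast Nat.one_le_iff_ne_zero.mp hn
  calc (n : ℝ)⁻¹ * Real.log S ≤ (n : ℝ)⁻¹ * (n * Real.log M) :=
        mul_le_mul_of_nonneg_left hlog (by positivity)
    _ = Real.log M := by field_simp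

end Metric2

/-- If `(X,d)` is compact with finite upper box-counting dimension, then the upper
dynamical metric order of any continuous map `f : X → X` vanishes. -/
theorem dynMetricOrder_eq_zero_of_finite_boxDim [MetricSpace X] [CompactSpace X]
    (f : X → X) (hf : Continuous f)
    (hfin : Filter.limsup
        (fun ε : ℝ => ((Real.log (Scard (dist : X → X → ℝ) ε) / |Real.log ε| : ℝ) : EReal))
        (nhdsWithin 0 (Set.Ioi 0)) < ⊤) :
    Filter.limsup
        (fun ε : ℝ =>
          elogPlus (Filter.limsup
              (fun n : ℕ =>
                (((n : ℝ)⁻¹ * Real.log (Scard (bowen (dist : X → X → ℝ) f n) ε) : ℝ) : EReal))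
              atTop)
            / ((|Real.log ε| : ℝ) : EReal))
        (nhdsWithin 0 (Set.Ioi 0)) = 0 := by
  rcases isEmpty_or_nonempty X with hempty | hne
  · -- empty space : everything is zero
    have hs : ∀ (ρ : X → X → ℝ) (δ : ℝ), Scard ρ δ = 0 := by
      intro ρ δ
      have hset : {n | ∃ E : Finset X, IsSep ρ δ E ∧ E.card = n} = {0} := by
        ext n
        constructor
        · rintro ⟨E, -, rfl⟩
          have : E = ∅ := Finset.eq_empty_of_isEmpty E
          simp [this]
        · rintro rfl
          exact ⟨∅, isSep_empty ρ δ, rfl⟩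
      rw [Scard, hset, csSup_singleton]
    have hzero : ∀ ε : ℝ,
        elogPlus (Filter.limsup
            (fun n : ℕ =>
              (((n : ℝ)⁻¹ * Real.log (Scard (bowen (dist : X → X → ℝ) f n) ε) : ℝ) : EReal))
            atTop) / ((|Real.log ε| : ℝ) : EReal) = 0 := by
      intro ε
      have h1 : (fun n : ℕ =>
          (((n : ℝ)⁻¹ * Real.log (Scard (bowen (dist : X → X → ℝ) f n) ε) : ℝ) : EReal))
          = fun _ : ℕ => (0 : EReal) := by
        funext n; simp [hs]
      rw [h1, limsup_const]
      have h2 : elogPlus 0 = 0 := by simp [elogPlus]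
      rw [h2, EReal.zero_div]
    simp only [hzero]
    exact limsup_const 0
  · -- main case
    obtain ⟨c, hc, -⟩ := EReal.exists_between_coe_real hfin
    set C : ℝ := max c 1 with hCdef
    have hC1 : (1 : ℝ) ≤ C := le_max_right _ _
    have hC0 : (0 : ℝ) < C := lt_of_lt_of_le one_pos hC1
    set K : ℝ := C * (1 + Real.log 2) with hKdef
    have hlog2 : (0 : ℝ) < Real.log 2 := Real.log_pos one_lt_two
    have hK1 : (1 : ℝ) < K := by nlinarith
    have hK0 : (0 : ℝ) < K := lt_trans one_pos hK1
    have hev1 : ∀ᶠ ε in 𝓝[>] (0 : ℝ),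
        Real.log (Scard (dist : X → X → ℝ) ε) / |Real.log ε| ≤ C := by
      filter_upwards [eventually_lt_of_limsup_lt hc] with ε hε
      have hεr : (Real.log (Scard (dist : X → X → ℝ) ε) / |Real.log ε| : ℝ) < c := by
        exact_mod_cast hε
      exact hεr.le.trans (le_max_left _ _)
    have htends : Tendsto (fun ε : ℝ => ε / 2) (𝓝[>] 0) (𝓝[>] 0) := by
      apply tendsto_nhdsWithin_of_tendsto_nhds_of_eventually_within
      · have h0 : Tendsto (fun ε : ℝ => ε / 2) (𝓝 0) (𝓝 (0 / 2)) :=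
          (continuous_id.div_const 2).tendsto 0
        simpa using h0.mono_left nhdsWithin_le_nhds
      · filter_upwards [self_mem_nhdsWithin] with ε (hε : ε ∈ Set.Ioi (0:ℝ))
        exact Set.mem_Ioi.mpr (half_pos hε)
    have hev2 : ∀ᶠ ε in 𝓝[>] (0 : ℝ),
        Real.log (Scard (dist : X → X → ℝ) (ε / 2)) / |Real.log (ε / 2)| ≤ C :=
      htends.eventually hev1
    set r : ℝ := min (1 / 2) (Real.exp (-1)) with hrdef
    have hr0 : (0 : ℝ) < r := lt_min (by norm_num) (Real.exp_pos _)
    have hreg : ∀ᶠ ε in 𝓝[>] (0 : ℝ), ε ∈ Set.Ioo 0 r :=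
      Ioo_mem_nhdsGT_of_mem ⟨le_rfl, hr0⟩
    -- the real-valued quotient
    set q : ℝ → ℝ := fun ε =>
      max 0 (Real.log (Filter.limsup
          (fun n : ℕ =>
            (((n : ℝ)⁻¹ * Real.log (Scard (bowen (dist : X → X → ℝ) f n) ε) : ℝ) : EReal))
          atTop).toReal) / |Real.log ε| with hqdef
    have hq0 : ∀ ε, 0 ≤ q ε := fun ε => div_nonneg (le_max_left _ _) (abs_nonneg _)
    -- basic facts at each ε in the region
    have hkey : ∀ ε : ℝ, ε ∈ Set.Ioo 0 r →
        Real.log (Scard (dist : X → X → ℝ) (ε / 2)) / |Real.log (ε / 2)| ≤ C →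
        q ε ≤ (Real.log K + Real.log |Real.log ε|) / |Real.log ε| := by
      intro ε hεr hdiv
      obtain ⟨hε0, hεlt⟩ := hεr
      have hε1 : ε < 1 := lt_of_lt_of_le hεlt ((min_le_left _ _).trans (by norm_num))
      have hlogε : Real.log ε < 0 := Real.log_neg hε0 hε1
      set t : ℝ := |Real.log ε| with htdef
      have ht : t = -Real.log ε := abs_of_neg hlogε
      have ht1 : 1 ≤ t := by
        have : ε < Real.exp (-1) := lt_of_lt_of_le hεlt (min_le_right _ _)
        have := Real.log_lt_log hε0 this
        rw [Real.log_exp] at this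
        rw [ht]; linarith
      have ht0 : (0 : ℝ) < t := lt_of_lt_of_le one_pos ht1
      have habs2 : |Real.log (ε / 2)| = t + Real.log 2 := by
        have hlogdiv : Real.log (ε / 2) = Real.log ε - Real.log 2 :=
          Real.log_div (ne_of_gt hε0) two_ne_zero
        have hneg : Real.log (ε / 2) < 0 := by rw [hlogdiv]; linarith
        rw [abs_of_neg hneg, hlogdiv, ht]; ring
      set M := Scard (dist : X → X → ℝ) (ε / 2) with hM
      have hM1 : 1 ≤ M := one_le_scard _ _ (scardSet_bddAbove (half_pos hε0))
      have hlogM : Real.log M ≤ C * (t + Real.log 2) := by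
        rw [habs2] at hdiv
        have hpos : (0 : ℝ) < t + Real.log 2 := by linarith
        exact (div_le_iff₀ hpos).mp hdiv
      have hlogM' : Real.log M ≤ K * t := by
        calc Real.log M ≤ C * (t + Real.log 2) := hlogM
          _ ≤ K * t := by
            rw [hKdef]
            nlinarith [mul_nonneg (mul_nonneg hC0.le hlog2.le) (sub_nonneg.mpr ht1)]
      -- the inner limsup
      set L := Filter.limsup
          (fun n : ℕ =>
            (((n : ℝ)⁻¹ * Real.log (Scard (bowen (dist : X → X → ℝ) f n) ε) : ℝ) : EReal))
          atTop with hL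
      have hL0 : (0 : EReal) ≤ L := inner_nonneg f ε
      have hLle : L ≤ ((Real.log M : ℝ) : EReal) := inner_bound f hε0
      have hLbot : L ≠ ⊥ := fun h => by rw [h] at hL0; exact absurd hL0 (by simp)
      have hLtop : L ≠ ⊤ := (lt_of_le_of_lt hLle (EReal.coe_lt_top _)).ne
      have htR : L.toReal ≤ Real.log M := by
        have := EReal.toReal_le_toReal hLle hLbot (EReal.coe_ne_top _)
        simpa using this
      have htR0 : 0 ≤ L.toReal := by
        have := EReal.toReal_le_toReal hL0 (by simp) hLtop
        simpa using this
      have hKt1 : (1 : ℝ) ≤ K * t := by nlinarith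
      have hnum : max 0 (Real.log L.toReal) ≤ Real.log K + Real.log t := by
        have h1 : max 0 (Real.log L.toReal) ≤ Real.log (K * t) :=
          maxlog_le htR0 (htR.trans hlogM') hKt1
        rwa [Real.log_mul (ne_of_gt hK0) (ne_of_gt ht0)] at h1
      rw [hqdef]
      exact (div_le_div_iff_of_pos_right ht0).mpr hnum
    have hqle : ∀ᶠ ε in 𝓝[>] (0 : ℝ),
        q ε ≤ (Real.log K + Real.log |Real.log ε|) / |Real.log ε| := by
      filter_upwards [hreg, hev2] with ε h1 h2 using hkey ε h1 h2
    have hglim : Tendsto (fun ε : ℝ => (Real.log K + Real.log |Real.log ε|) / |Real.log ε|)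
        (𝓝[>] (0 : ℝ)) (𝓝 0) := by
      have h1 : Tendsto (fun ε : ℝ => |Real.log ε|) (𝓝[>] (0 : ℝ)) atTop :=
        tendsto_abs_atBot_atTop.comp Real.tendsto_log_nhdsGT_zero
      have h2 : Tendsto (fun t : ℝ => (Real.log K + Real.log t) / t) atTop (𝓝 0) := by
        have ha : Tendsto (fun t : ℝ => Real.log K / t) atTop (𝓝 0) :=
          tendsto_const_nhds.div_atTop tendsto_id
        have hb : Tendsto (fun t : ℝ => Real.log t / t) atTop (𝓝 0) :=
          Real.isLittleO_log_id_atTop.tendsto_div_nhds_zero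
        have := ha.add hb
        simp only [add_zero] at this
        refine this.congr fun t => ?_
        rw [← add_div]
      exact h2.comp h1
    have hqlim : Tendsto q (𝓝[>] (0 : ℝ)) (𝓝 0) :=
      tendsto_of_tendsto_of_tendsto_of_le_of_le' tendsto_const_nhds hglim
        (Eventually.of_forall hq0) hqle
    -- identify the EReal function with the coercion of q
    have hFq : ∀ᶠ ε in 𝓝[>] (0 : ℝ),
        elogPlus (Filter.limsup
            (fun n : ℕ =>
              (((n : ℝ)⁻¹ * Real.log (Scard (bowen (dist : X → X → ℝ) f n) ε) : ℝ) : EReal))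
            atTop) / ((|Real.log ε| : ℝ) : EReal) = ((q ε : ℝ) : EReal) := by
      filter_upwards [hreg] with ε hεr
      obtain ⟨hε0, hεlt⟩ := hεr
      set L := Filter.limsup
          (fun n : ℕ =>
            (((n : ℝ)⁻¹ * Real.log (Scard (bowen (dist : X → X → ℝ) f n) ε) : ℝ) : EReal))
          atTop with hL
      have hLtop : L ≠ ⊤ :=
        (lt_of_le_of_lt (inner_bound f hε0) (EReal.coe_lt_top _)).ne
      have h1 : elogPlus L = ((max 0 (Real.log L.toReal) : ℝ) : EReal) := if_neg hLtop
      rw [h1, hqdef]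
      exact (EReal.coe_div _ _).symm
    have htendE : Tendsto (fun ε : ℝ => ((q ε : ℝ) : EReal)) (𝓝[>] (0 : ℝ)) (𝓝 (0 : EReal)) := by
      have := EReal.tendsto_coe.mpr hqlim
      simpa using this
    exact (limsup_congr hFq).trans htendE.limsup_eq
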